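/- arXiv:1404.4858 — 2 statements merged into one kernel-verified Lean document; each statement's English description precedes it below -/
import Mathlib

section
/- For the head-on collision system with G(q) = e^{-|q|}, c > 0, and P = 0, the functions q(t) = −2 log(sech(ct)) and p(t) = 2c/tanh(ct) satisfy the ODEs q̇ = (1 − e^{−|q|})p and ṗ = −(p²/2) sgn(q) e^{−|q|} for all t > 0. -/
/-- For `G(q) = e^{−|q|}` and `P = 0`, the functions
`q(t) = −2 log(sech(ct))` and `p(t) = 2c/tanh(ct)` satisfy
`q̇ = (1 − e^{−|q|})p` and `ṗ = −(p²/2) sgn(q) e^{−|q|}` for all `t > 0`. -/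
theorem exact_head_on_solution_b_three_halves
    (c : ℝ) (hc : 0 < c) :
    let q : ℝ → ℝ := fun t => -2 * Real.log (1 / Real.cosh (c * t))
    let p : ℝ → ℝ := fun t => 2 * c / Real.tanh (c * t)
    ∀ t : ℝ, 0 < t →
      HasDerivAt q ((1 - Real.exp (-|q t|)) * p t) t ∧
      HasDerivAt p (-((p t) ^ 2 / 2) * Real.sign (q t) * Real.exp (-|q t|)) t := by
  intro q p t ht
  have hct : 0 < c * t := mul_pos hc ht
  set u := c * t with hu
  have hch1 : 1 < Real.cosh u := Real.one_lt_cosh.mpr (ne_of_gt hct)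
  have hch : 0 < Real.cosh u := lt_trans one_pos hch1
  have hsh : 0 < Real.sinh u := Real.sinh_pos_iff.mpr hct
  have hth : Real.tanh u = Real.sinh u / Real.cosh u := Real.tanh_eq_sinh_div_cosh u
  have hqrw : q = fun s : ℝ => 2 * Real.log (Real.cosh (c * s)) := by
    funext s
    simp [q, one_div, Real.log_inv]
  have hprw : p = fun s : ℝ => 2 * c * Real.cosh (c * s) / Real.sinh (c * s) := by
    funext s
    simp only [p, Real.tanh_eq_sinh_div_cosh, div_div_eq_mul_div]
  have hqval : q t = 2 * Real.log (Real.cosh u) := by rw [hqrw]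
  have hpval : p t = 2 * c * Real.cosh u / Real.sinh u := by rw [hprw]
  have hlogpos : 0 < Real.log (Real.cosh u) := Real.log_pos hch1
  have hqpos : 0 < q t := by rw [hqval]; positivity
  have habs : |q t| = 2 * Real.log (Real.cosh u) := by rw [abs_of_pos hqpos, hqval]
  have hexp : Real.exp (-|q t|) = (Real.cosh u ^ 2)⁻¹ := by
    rw [habs, show -(2 * Real.log (Real.cosh u)) = Real.log ((Real.cosh u ^ 2)⁻¹) by
      rw [Real.log_inv, Real.log_pow]; push_cast; ring]
    exact Real.exp_log (by positivity)
  have hsign : Real.sign (q t) = 1 := Real.sign_of_pos hqpos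
  have hid : HasDerivAt (fun s : ℝ => c * s) c t := by
    simpa using (hasDerivAt_id t).const_mul c
  have hcosh : HasDerivAt (fun s : ℝ => Real.cosh (c * s)) (Real.sinh u * c) t :=
    (Real.hasDerivAt_cosh u).comp t hid
  have hsinh : HasDerivAt (fun s : ℝ => Real.sinh (c * s)) (Real.cosh u * c) t :=
    (Real.hasDerivAt_sinh u).comp t hid
  have hcsq : Real.cosh u ^ 2 - Real.sinh u ^ 2 = 1 := Real.cosh_sq_sub_sinh_sq u
  constructor
  · have hq' : HasDerivAt q (2 * (Real.sinh u * c / Real.cosh u)) t := by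
      rw [hqrw]
      exact (hcosh.log (ne_of_gt hch)).const_mul 2
    convert hq' using 1
    rw [hexp, hpval]
    field_simp
    linear_combination hcsq
  · have hp' : HasDerivAt p ((2 * c * (Real.sinh u * c) * Real.sinh u -
        2 * c * Real.cosh u * (Real.cosh u * c)) / Real.sinh u ^ 2) t := by
      rw [hprw]
      exact (hcosh.const_mul (2 * c)).div hsinh (ne_of_gt hsh)
    convert hp' using 1
    rw [hexp, hpval, hsign]
    field_simp
    linear_combination hcsq
end

section
/- For the system q̇ = 4Hz, ż = (1/2) sgn(q) e^{−|q|} (the b = 3/2 head-on collision system in inverse-momentum variables), with H = c² and shifted collision time t_c, the functions q(t) = −2 log(sech(c(t − t_c))) and z(t) = tanh(c(t − t_c))/(2c) form an exact solution for t ≠ t_c, and this solution extends continuously through t = t_c with q(t_c) = 0, z(t_c) = 0. -/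
/-- For the `b = 3/2` head-on collision system in inverse-momentum variables,
`q̇ = 4Hz`, `ż = (1/2) sgn(q) e^{−|q|}` with `H = c²`, the functions
`q(t) = −2 log(sech(c(t−t_c)))`, `z(t) = tanh(c(t−t_c))/(2c)` solve the system
for `t ≠ t_c` and extend continuously through `t = t_c` with
`q(t_c) = 0`, `z(t_c) = 0`. -/
theorem exact_head_on_solution_inverse_momentum
    (c t_c : ℝ) (hc : 0 < c) :
    let H : ℝ := c ^ 2
    let q : ℝ → ℝ := fun t => -2 * Real.log (1 / Real.cosh (c * (t - t_c)))
    let z : ℝ → ℝ := fun t => Real.tanh (c * (t - t_c)) / (2 * c)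
    (∀ t : ℝ, t ≠ t_c →
      HasDerivAt q (4 * H * z t) t ∧
      HasDerivAt z ((1 / 2 : ℝ) * Real.sign (q t) * Real.exp (-|q t|)) t) ∧
    q t_c = 0 ∧ z t_c = 0 ∧ Continuous q ∧ Continuous z := by
  intro H q z
  have hcoshpos : ∀ x : ℝ, 0 < Real.cosh x := Real.cosh_pos
  have hqeq : q = fun t => 2 * Real.log (Real.cosh (c * (t - t_c))) := by
    funext t
    simp [q, Real.log_inv]
  refine ⟨?_, ?_, ?_, ?_, ?_⟩
  · intro t ht
    set u := c * (t - t_c) with hu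
    have hu0 : u ≠ 0 := mul_ne_zero hc.ne' (sub_ne_zero.mpr ht)
    have hcosh1 : 1 < Real.cosh u := by
      have := Real.one_lt_cosh (x := u)
      exact this.mpr hu0
    have hdu : HasDerivAt (fun t => c * (t - t_c)) c t := by
      simpa using ((hasDerivAt_id t).sub_const t_c).const_mul c
    have hcoshd : HasDerivAt (fun t => Real.cosh (c * (t - t_c))) (Real.sinh u * c) t :=
      by have := (Real.hasDerivAt_cosh u).comp t hdu; exact this
    have hlogd : HasDerivAt (fun t => Real.log (Real.cosh (c * (t - t_c))))
        ((Real.cosh u)⁻¹ * (Real.sinh u * c)) t :=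
      by have := (Real.hasDerivAt_log (hcoshpos u).ne').comp t hcoshd; exact this
    have hcne : Real.cosh u ≠ 0 := (hcoshpos u).ne'
    have hsinhd : HasDerivAt (fun t => Real.sinh (c * (t - t_c))) (Real.cosh u * c) t :=
      by have := (Real.hasDerivAt_sinh u).comp t hdu; exact this
    have htanhd : HasDerivAt (fun t => Real.sinh (c * (t - t_c)) / Real.cosh (c * (t - t_c)))
        ((Real.cosh u * c * Real.cosh u - Real.sinh u * (Real.sinh u * c)) / Real.cosh u ^ 2)
        t := hsinhd.div hcoshd hcne
    have hqt : q t = 2 * Real.log (Real.cosh u) := by rw [hqeq]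
    have hqpos : 0 < q t := by
      rw [hqt]
      have : 0 < Real.log (Real.cosh u) := Real.log_pos hcosh1
      linarith
    have hsq : Real.cosh u ^ 2 - Real.sinh u ^ 2 = 1 := Real.cosh_sq_sub_sinh_sq u
    constructor
    · have h1 : HasDerivAt q (2 * ((Real.cosh u)⁻¹ * (Real.sinh u * c))) t := by
        rw [hqeq]; exact hlogd.const_mul 2
      convert h1 using 1
      simp only [z, Real.tanh_eq_sinh_div_cosh, H]
      field_simp
      ring
    · have h1 : HasDerivAt z
          ((Real.cosh u * c * Real.cosh u - Real.sinh u * (Real.sinh u * c)) / Real.cosh u ^ 2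
            / (2 * c)) t := by
        have h2 := htanhd.div_const (2 * c)
        have hz : z = fun s => Real.sinh (c * (s - t_c)) / Real.cosh (c * (s - t_c)) / (2 * c) := by
          funext s; simp [z, Real.tanh_eq_sinh_div_cosh]
        rw [hz]; exact h2
      convert h1 using 1
      rw [Real.sign_of_pos hqpos, abs_of_pos hqpos, hqt]
      have hexp : Real.exp (-(2 * Real.log (Real.cosh u))) = (Real.cosh u ^ 2)⁻¹ := by
        rw [Real.exp_neg, two_mul, Real.exp_add, Real.exp_log (hcoshpos u), sq]
      rw [hexp]
      field_simp
      linear_combination (-1 : ℝ) * hsq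
  · simp [q]
  · simp [z]
  · rw [hqeq]
    exact (continuous_const.mul ((Real.continuous_cosh.comp (by continuity)).log
      fun t => (hcoshpos _).ne'))
  · have : z = fun t => Real.sinh (c * (t - t_c)) / Real.cosh (c * (t - t_c)) / (2 * c) := by
      funext t; simp [z, Real.tanh_eq_sinh_div_cosh]
    rw [this]
    exact ((Real.continuous_sinh.comp (by continuity)).div
      (Real.continuous_cosh.comp (by continuity)) fun t => (hcoshpos _).ne').div_const _
end
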